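/- arXiv:1202.6556 — 2 statements merged into one kernel-verified Lean document; each statement's English description precedes it below -/
import Mathlib

section
/- Let G be a graph, C a longest cycle in G, and P = x→y a longest path in G∖C of length p̄ ≥ 1. If |N_C(x)| ≥ 2, |N_C(y)| ≥ 2, N_C(x) ≠ N_C(y), and p̄ = 1, then |C| ≥ 3δ + max{σ₁, σ₂} − 1 ≥ 3δ, where σ₁ = |N_C(x)∖N_C(y)|, σ₂ = |N_C(y)∖N_C(x)| and δ is the minimum degree of G. -/
open SimpleGraph

namespace ToughPaper

variable {V : Type*}

/-- Number of connected components of the subgraph induced on the complement of `S`. -/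
noncomputable def numComp (G : SimpleGraph V) (S : Set V) : ℕ :=
  Nat.card (G.induce Sᶜ).ConnectedComponent

/-- The toughness of `G` is greater than 1: `|S| > s(G∖S)` for every cutset `S`. -/
def ToughGtOne [Fintype V] (G : SimpleGraph V) : Prop :=
  ∀ S : Finset V, 1 < numComp G ↑S → numComp G ↑S < S.card

/-- The toughness of `G` is at most 1: some cutset `S` has `|S| ≤ s(G∖S)`. -/
def ToughLeOne [Fintype V] (G : SimpleGraph V) : Prop :=
  ∃ S : Finset V, 1 < numComp G ↑S ∧ S.card ≤ numComp G ↑S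

/-- `G` is `k`-connected: more than `k` vertices and no cutset of size `< k`. -/
def KConnected [Fintype V] (k : ℕ) (G : SimpleGraph V) : Prop :=
  k < Fintype.card V ∧ ∀ S : Finset V, S.card < k → (G.induce (↑S : Set V)ᶜ).Connected

/-- The (vertex) connectivity `κ(G)`. -/
noncomputable def conn [Fintype V] (G : SimpleGraph V) : ℕ :=
  sSup {k | KConnected k G}

/-- `C` is a longest cycle in `G`. -/
def IsLongestCycle (G : SimpleGraph V) {v : V} (C : G.Walk v v) : Prop :=
  C.IsCycle ∧ ∀ (u : V) (D : G.Walk u u), D.IsCycle → D.length ≤ C.length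

/-- `P` is a longest path among paths of `G` avoiding the vertex list `W`
(i.e. a longest path of `G ∖ W`). -/
def IsLongestPathOff (G : SimpleGraph V) (W : List V) {x y : V} (P : G.Walk x y) : Prop :=
  P.IsPath ∧ (∀ u ∈ P.support, u ∉ W) ∧
  ∀ (a b : V) (Q : G.Walk a b), Q.IsPath → (∀ u ∈ Q.support, u ∉ W) → Q.length ≤ P.length

/-- The neighbors of `x` lying on the vertex list `W` (e.g. `N_C(x)` for `W = C.support`). -/
def nbrsOn (G : SimpleGraph V) (W : List V) (x : V) : Set V :=
  {u | u ∈ W ∧ G.Adj x u}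

/-- The number of edges of the oriented arc of the closed walk `C` from `a` to `b`. -/
noncomputable def arcLen [DecidableEq V] {G : SimpleGraph V} {v : V}
    (C : G.Walk v v) (a b : V) : ℕ :=
  if h : ∃ (ha : a ∈ C.support), b ∈ (C.rotate a ha).support then
    ((C.rotate a h.choose).takeUntil b h.choose_spec).length
  else 0

/-- The vertices of the oriented arc of `C` from `a` to `b`. -/
noncomputable def arcSupport [DecidableEq V] {G : SimpleGraph V} {v : V}
    (C : G.Walk v v) (a b : V) : List V :=
  if h : ∃ (ha : a ∈ C.support), b ∈ (C.rotate a ha).support then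
    ((C.rotate a h.choose).takeUntil b h.choose_spec).support
  else []

/-- The successor of `a` on the oriented closed walk `C`. -/
noncomputable def cycSucc [DecidableEq V] {G : SimpleGraph V} {v : V}
    (C : G.Walk v v) (a : V) : V :=
  if h : a ∈ C.support then (C.rotate a h).getVert 1 else a

/-- The predecessor of `a` on the oriented closed walk `C`. -/
noncomputable def cycPred [DecidableEq V] {G : SimpleGraph V} {v : V}
    (C : G.Walk v v) (a : V) : V :=
  if h : a ∈ C.support then (C.rotate a h).getVert ((C.rotate a h).length - 1) else a

/-- `a` and `b` are consecutive elements of `N` on `C`; the arc `a→b` is then an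
elementary segment created by `N`. -/
def ConsecOnC [DecidableEq V] {G : SimpleGraph V} {v : V}
    (C : G.Walk v v) (N : Set V) (a b : V) : Prop :=
  a ∈ N ∧ b ∈ N ∧ a ≠ b ∧ ∀ w ∈ arcSupport C a b, w ≠ a → w ≠ b → w ∉ N

/-- `u` is an interior vertex of the arc `a→b` of `C`. -/
def InteriorArc [DecidableEq V] {G : SimpleGraph V} {v : V}
    (C : G.Walk v v) (a b : V) (u : V) : Prop :=
  u ∈ arcSupport C a b ∧ u ≠ a ∧ u ≠ b

/-- `L` is an intermediate path between the elementary segments `a₁→b₁` and `a₂→b₂`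
(created by `N` on `C`), relative to the path with vertex list `Psupp`. -/
def IsInterPath [DecidableEq V] (G : SimpleGraph V) {v z w : V} (C : G.Walk v v)
    (Psupp : List V) (N : Set V) (a₁ b₁ a₂ b₂ : V) (L : G.Walk z w) : Prop :=
  ConsecOnC C N a₁ b₁ ∧ ConsecOnC C N a₂ b₂ ∧ a₁ ≠ a₂ ∧
  L.IsPath ∧ 0 < L.length ∧ InteriorArc C a₁ b₁ z ∧ InteriorArc C a₂ b₂ w ∧
  ∀ u ∈ L.support, (u ∈ C.support ∨ u ∈ Psupp) → u = z ∨ u = w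

/-- Vertex type of the Petersen graph: 2-element subsets of a 5-element set. -/
def PetersenV := {s : Finset (Fin 5) // s.card = 2}

instance : Fintype PetersenV := inferInstanceAs (Fintype {s : Finset (Fin 5) // s.card = 2})
instance : DecidableEq PetersenV := inferInstanceAs (DecidableEq {s : Finset (Fin 5) // s.card = 2})

/-- The Petersen graph as the Kneser graph `K(5,2)`. -/
def petersen : SimpleGraph PetersenV where
  Adj a b := Disjoint a.1 b.1 ∧ a ≠ b
  symm := ⟨fun a b h => ⟨h.1.symm, h.2.symm⟩⟩
  loopless := ⟨fun a h => h.2 rfl⟩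

instance : DecidableRel petersen.Adj :=
  fun a b => inferInstanceAs (Decidable (Disjoint a.1 b.1 ∧ a ≠ b))



section Helpers

variable {V : Type*} [DecidableEq V] {G : SimpleGraph V}

omit [DecidableEq V] in
lemma support_eq_map {u w : V} (p : G.Walk u w) :
    p.support = (List.range (p.length + 1)).map p.getVert := by
  induction p with
  | nil => simp [SimpleGraph.Walk.getVert]
  | cons h p ih =>
    rw [SimpleGraph.Walk.support_cons, ih, SimpleGraph.Walk.length_cons,
      List.range_succ_eq_map (n := p.length + 1), List.map_cons, List.map_map]
    simp only [SimpleGraph.Walk.getVert_zero]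
    congr 1

omit [DecidableEq V] in
lemma tail_support_eq_map {u : V} (C : G.Walk u u) :
    C.support.tail = (List.range C.length).map (fun i => C.getVert (i + 1)) := by
  rw [support_eq_map, List.range_succ_eq_map, List.map_cons, List.tail_cons, List.map_map]
  apply List.map_congr_left
  intro a _
  simp [Function.comp]

omit [DecidableEq V] in
lemma getVert_inj {u : V} {C : G.Walk u u} (hc : C.IsCycle) {i j : ℕ}
    (hi : i < C.length) (hj : j < C.length) (h : C.getVert (i + 1) = C.getVert (j + 1)) :
    i = j := by
  have hnd := hc.support_nodup
  rw [tail_support_eq_map] at hnd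
  exact (List.nodup_map_iff_inj_on List.nodup_range).mp hnd i
    (List.mem_range.mpr hi) j (List.mem_range.mpr hj) h

open SimpleGraph.Walk in
lemma getVert_take_drop {u : V} (C : G.Walk u u) {a : V} (h : a ∈ C.support) (j : ℕ) :
    C.getVert ((C.takeUntil a h).length + j) = (C.dropUntil a h).getVert j := by
  have key := congrArg (fun (w : G.Walk u u) =>
    w.getVert ((C.takeUntil a h).length + j)) (C.take_spec h)
  rw [← key, getVert_append, if_neg (by omega)]
  congr 1
  omega

open SimpleGraph.Walk in
lemma getVert_take {u : V} (C : G.Walk u u) {a : V} (h : a ∈ C.support) {i : ℕ}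
    (hi : i < (C.takeUntil a h).length) :
    (C.takeUntil a h).getVert i = C.getVert i := by
  have key := congrArg (fun (w : G.Walk u u) => w.getVert i) (C.take_spec h)
  rw [← key, getVert_append, if_pos hi]

open SimpleGraph.Walk in
lemma length_takeUntil_eq {u : V} {C : G.Walk u u} (hc : C.IsCycle) {m : ℕ}
    (h1 : 1 ≤ m) (h2 : m < C.length) (h : C.getVert m ∈ C.support) :
    (C.takeUntil (C.getVert m) h).length = m := by
  have hL3 : 3 ≤ C.length := hc.three_le_length
  set t := (C.takeUntil (C.getVert m) h).length with htdef
  have ht : t ≤ C.length := C.length_takeUntil_le h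
  have hCt : C.getVert t = C.getVert m := by
    have := getVert_take_drop C h 0
    simpa using this
  have ht0 : t ≠ 0 := by
    intro h0
    rw [h0, getVert_zero] at hCt
    have hCt' : C.getVert C.length = C.getVert m := by rw [C.getVert_length]; exact hCt
    have : C.length - 1 = m - 1 := by
      apply getVert_inj hc (by omega) (by omega)
      rw [show C.length - 1 + 1 = C.length by omega, show m - 1 + 1 = m by omega]
      exact hCt'
    omega
  have : t - 1 = m - 1 := by
    apply getVert_inj hc (by omega) (by omega)
    rw [show t - 1 + 1 = t by omega, show m - 1 + 1 = m by omega]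
    exact hCt
  omega

open SimpleGraph.Walk in
lemma rot_exists {u : V} {C : G.Walk u u} (hc : C.IsCycle) {m : ℕ}
    (h1 : 1 ≤ m) (h2 : m ≤ C.length) :
    ∃ Q : G.Walk (C.getVert m) (C.getVert m), Q.IsCycle ∧ Q.length = C.length ∧
      (∀ w ∈ Q.support, w ∈ C.support) ∧
      Q.getVert 1 = C.getVert (m % C.length + 1) ∧
      Q.getVert 2 = C.getVert ((m + 1) % C.length + 1) := by
  have hL3 : 3 ≤ C.length := hc.three_le_length
  by_cases hm : m = C.length
  · have he : C.getVert m = u := by rw [hm, C.getVert_length]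
    rw [he]
    refine ⟨C, hc, rfl, fun w hw => hw, ?_, ?_⟩
    · rw [hm, Nat.mod_self]
    · rw [hm, show (C.length + 1) % C.length = 1 by
        rw [Nat.add_mod_left]; exact Nat.mod_eq_of_lt (by omega)]
  · have hm' : m < C.length := by omega
    have ha : C.getVert m ∈ C.support := mem_support_iff_exists_getVert.mpr ⟨m, rfl, by omega⟩
    have ht : (C.takeUntil (C.getVert m) ha).length = m := length_takeUntil_eq hc h1 hm' ha
    have hsum : (C.takeUntil (C.getVert m) ha).length + (C.dropUntil (C.getVert m) ha).length
        = C.length := by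
      rw [← length_append, C.take_spec ha]
    have hd : (C.dropUntil (C.getVert m) ha).length = C.length - m := by omega
    have hgd : ∀ j, (C.dropUntil (C.getVert m) ha).getVert j = C.getVert (m + j) := by
      intro j
      rw [← getVert_take_drop C ha j, ht]
    refine ⟨C.rotate _ ha, hc.rotate ha, ?_, ?_, ?_, ?_⟩
    · show ((C.dropUntil _ ha).append (C.takeUntil _ ha)).length = C.length
      rw [length_append]; omega
    · intro w hw
      have hw' : w ∈ ((C.dropUntil _ ha).append (C.takeUntil _ ha)).support := hw
      rcases (mem_support_append_iff _ _).mp hw' with h' | h'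
      · exact C.support_dropUntil_subset ha h'
      · exact C.support_takeUntil_subset ha h'
    · show ((C.dropUntil _ ha).append (C.takeUntil _ ha)).getVert 1 = _
      rw [Nat.mod_eq_of_lt hm', getVert_append]
      by_cases hc1 : 1 < C.length - m
      · rw [if_pos (by omega), hgd]
      · rw [if_neg (by omega)]
        have hm1 : m + 1 = C.length := by omega
        rw [show 1 - (C.dropUntil (C.getVert m) ha).length = 0 by omega, getVert_zero,
          hm1, C.getVert_length]
    · show ((C.dropUntil _ ha).append (C.takeUntil _ ha)).getVert 2 = _
      rw [getVert_append]
      by_cases hc2 : 2 < C.length - m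
      · rw [if_pos (by omega), hgd, Nat.mod_eq_of_lt (by omega)]
      · rw [if_neg (by omega)]
        by_cases hm2 : m + 2 = C.length
        · rw [show 2 - (C.dropUntil (C.getVert m) ha).length = 0 by omega, getVert_zero,
            Nat.mod_eq_of_lt (by omega), show m + 1 + 1 = C.length by omega, C.getVert_length]
        · have hm1 : m + 1 = C.length := by omega
          rw [show 2 - (C.dropUntil (C.getVert m) ha).length = 1 by omega,
            getVert_take C ha (by omega), hm1, Nat.mod_self]

open SimpleGraph.Walk in
omit [DecidableEq V] in
lemma ear2 {v : V} {C : G.Walk v v} (hC : IsLongestCycle G C) {a c x' : V} (R : G.Walk c a)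
    (hR : R.IsPath) (hsub : ∀ w ∈ R.support, w ∈ C.support) (hx : x' ∉ C.support)
    (hac : a ≠ c) (h1 : G.Adj a x') (h2 : G.Adj x' c) (hlen : C.length ≤ R.length + 1) :
    False := by
  have hxR : x' ∉ R.support := fun h => hx (hsub _ h)
  set R' := R.append (Walk.cons h1 Walk.nil) with hR'def
  have hR'sup : R'.support = R.support ++ [x'] := by
    rw [hR'def, support_append, support_cons, support_nil]; rfl
  have hR'path : R'.IsPath := by
    rw [isPath_def, hR'sup, List.nodup_append]
    exact ⟨hR.support_nodup, List.nodup_singleton _, by simp; intro b hb h; exact hxR (h ▸ hb)⟩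
  have hR'edges : R'.edges = R.edges ++ [s(a, x')] := by
    rw [hR'def, edges_append, edges_cons, edges_nil]
  have hcyc : (Walk.cons h2 R').IsCycle := by
    rw [cons_isCycle_iff]
    refine ⟨hR'path, ?_⟩
    rw [hR'edges]
    intro hmem
    rcases List.mem_append.mp hmem with hm | hm
    · exact hx (hsub _ (R.fst_mem_support_of_mem_edges hm))
    · simp only [List.mem_singleton, Sym2.eq_iff] at hm
      rcases hm with ⟨hm1, hm2⟩ | ⟨hm1, hm2⟩
      · exact hx (hm1 ▸ hsub _ R.end_mem_support)
      · exact hac (hm2.symm)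
  have hle := hC.2 x' (Walk.cons h2 R') hcyc
  rw [length_cons, hR'def, length_append, length_cons, length_nil] at hle
  omega

open SimpleGraph.Walk in
omit [DecidableEq V] in
lemma ear3 {v : V} {C : G.Walk v v} (hC : IsLongestCycle G C) {a c x' y' : V} (R : G.Walk c a)
    (hR : R.IsPath) (hsub : ∀ w ∈ R.support, w ∈ C.support) (hx : x' ∉ C.support)
    (hy : y' ∉ C.support) (hxy : x' ≠ y')
    (h1 : G.Adj a x') (h12 : G.Adj x' y') (h2 : G.Adj y' c)
    (hlen : C.length ≤ R.length + 2) : False := by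
  have hxR : x' ∉ R.support := fun h => hx (hsub _ h)
  have hyR : y' ∉ R.support := fun h => hy (hsub _ h)
  set R' := R.append (Walk.cons h1 Walk.nil) with hR'def
  have hR'sup : R'.support = R.support ++ [x'] := by
    rw [hR'def, support_append, support_cons, support_nil]; rfl
  have hR'path : R'.IsPath := by
    rw [isPath_def, hR'sup, List.nodup_append]
    exact ⟨hR.support_nodup, List.nodup_singleton _, by simp; intro b hb h; exact hxR (h ▸ hb)⟩
  have hR'edges : R'.edges = R.edges ++ [s(a, x')] := by
    rw [hR'def, edges_append, edges_cons, edges_nil]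
  set R'' := Walk.cons h2 R' with hR''def
  have hR''path : R''.IsPath := by
    apply hR'path.cons
    rw [hR'sup]
    intro hmem
    rcases List.mem_append.mp hmem with hm | hm
    · exact hyR hm
    · have hyx : y' = x' := by simpa using hm
      exact hxy hyx.symm
  have hcyc : (Walk.cons h12 R'').IsCycle := by
    rw [cons_isCycle_iff]
    refine ⟨hR''path, ?_⟩
    rw [hR''def, edges_cons, hR'edges]
    intro hmem
    rcases List.mem_cons.mp hmem with hm | hm
    · rw [Sym2.eq_iff] at hm
      rcases hm with ⟨hm1, hm2⟩ | ⟨hm1, hm2⟩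
      · exact hxy hm1
      · exact hx (hm1 ▸ hsub _ R.start_mem_support)
    · rcases List.mem_append.mp hm with hm' | hm'
      · exact hx (hsub _ (R.fst_mem_support_of_mem_edges hm'))
      · simp only [List.mem_singleton, Sym2.eq_iff] at hm'
        rcases hm' with ⟨hm1, hm2⟩ | ⟨hm1, hm2⟩
        · exact hx (hm1 ▸ hsub _ R.end_mem_support)
        · exact hy (hm2 ▸ hsub _ R.end_mem_support)
  have hle := hC.2 x' (Walk.cons h12 R'') hcyc
  rw [length_cons, hR''def, length_cons, hR'def, length_append, length_cons, length_nil] at hle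
  omega

omit [DecidableEq V] in
lemma zmod_closure {L : ℕ} [NeZero L] (S : Finset (ZMod L)) (hne : S.Nonempty)
    (hcl : ∀ k ∈ S, k + 1 ∈ S) : S = Finset.univ := by
  obtain ⟨a, ha⟩ := hne
  have key : ∀ n : ℕ, a + (n : ZMod L) ∈ S := by
    intro n
    induction n with
    | zero => simpa using ha
    | succ n ih =>
      have := hcl _ ih
      rwa [Nat.cast_add_one, ← add_assoc]
  apply Finset.eq_univ_of_forall
  intro z
  have hz := key (z - a).val
  rwa [ZMod.natCast_rightInverse (z - a), show a + (z - a) = z by ring] at hz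

end Helpers

/-- **Lemma 1, case `p̄ = 1`.** If `C` is a longest cycle, `P = x→y` a longest path in
`G ∖ C` of length `1`, `|N_C(x)| ≥ 2`, `|N_C(y)| ≥ 2` and `N_C(x) ≠ N_C(y)`, then
`|C| ≥ 3δ + max {σ₁, σ₂} − 1 ≥ 3δ`. -/
theorem lemma1_pbar_one {V : Type*} [Fintype V] [DecidableEq V]
    (G : SimpleGraph V) [DecidableRel G.Adj] {v x y : V}
    (C : G.Walk v v) (P : G.Walk x y)
    (hC : IsLongestCycle G C) (hP : IsLongestPathOff G C.support P)
    (hp : P.length = 1)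
    (hx : 2 ≤ (nbrsOn G C.support x).ncard) (hy : 2 ≤ (nbrsOn G C.support y).ncard)
    (hne : nbrsOn G C.support x ≠ nbrsOn G C.support y) :
    3 * G.minDegree +
      max ((nbrsOn G C.support x \ nbrsOn G C.support y).ncard)
          ((nbrsOn G C.support y \ nbrsOn G C.support x).ncard) - 1 ≤ C.length ∧
    3 * G.minDegree ≤ C.length := by
  classical
  obtain ⟨hCc, hCmax⟩ := hC
  obtain ⟨hPp, hPoff, hPmax⟩ := hP
  have hL3 : 3 ≤ C.length := hCc.three_le_length
  set L := C.length with hLdef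
  haveI : NeZero L := ⟨by omega⟩
  haveI : Fact (1 < L) := ⟨by omega⟩
  have hxC : x ∉ C.support := hPoff x P.start_mem_support
  have hyC : y ∉ C.support := hPoff y P.end_mem_support
  have hxy : G.Adj x y := by
    have h0 := P.adj_getVert_succ (i := 0) (by omega)
    rw [P.getVert_zero] at h0
    rwa [show (0 + 1 : ℕ) = P.length by omega, P.getVert_length] at h0
  have hxyne : x ≠ y := hxy.ne
  set A := nbrsOn G C.support x with hA
  set B := nbrsOn G C.support y with hB
  have hmemA : ∀ w, w ∈ A ↔ (w ∈ C.support ∧ G.Adj x w) := fun w => Iff.rfl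
  have hmemB : ∀ w, w ∈ B ↔ (w ∈ C.support ∧ G.Adj y w) := fun w => Iff.rfl
  have hPsup : ∀ u ∈ P.support, u = x ∨ u = y := by
    intro u hu
    obtain ⟨n, hn, hnle⟩ := Walk.mem_support_iff_exists_getVert.mp hu
    rw [hp] at hnle
    interval_cases n
    · left; rw [← hn, P.getVert_zero]
    · right; rw [← hn, show (1 : ℕ) = P.length by omega, P.getVert_length]
  set γ : ZMod L → V := fun k => C.getVert (k.val + 1) with hγ
  have hvlt : ∀ k : ZMod L, k.val < L := fun k => ZMod.val_lt k
  have hγinj : Function.Injective γ := by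
    intro j k h
    exact ZMod.val_injective L (getVert_inj hCc (hvlt j) (hvlt k) h)
  have hsurj : ∀ w ∈ C.support, ∃ k : ZMod L, γ k = w := by
    intro w hw
    obtain ⟨n, hn, hnle⟩ := Walk.mem_support_iff_exists_getVert.mp hw
    by_cases hn0 : n = 0
    · refine ⟨((L - 1 : ℕ) : ZMod L), ?_⟩
      show C.getVert (((L - 1 : ℕ) : ZMod L).val + 1) = w
      rw [ZMod.val_natCast_of_lt (by omega), show L - 1 + 1 = L by omega]
      rw [hLdef, C.getVert_length, ← hn, hn0, C.getVert_zero]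
    · refine ⟨((n - 1 : ℕ) : ZMod L), ?_⟩
      show C.getVert (((n - 1 : ℕ) : ZMod L).val + 1) = w
      rw [ZMod.val_natCast_of_lt (by omega), show n - 1 + 1 = n by omega, hn]
  have hv2 : (2 : ZMod L).val = 2 := by
    rw [show (2 : ZMod L) = ((2 : ℕ) : ZMod L) by norm_cast, ZMod.val_natCast,
      Nat.mod_eq_of_lt (by omega)]
  have hval1 : ∀ k : ZMod L, (k + 1).val = (k.val + 1) % L := by
    intro k
    rw [ZMod.val_add, ZMod.val_one L]
  have hval2 : ∀ k : ZMod L, (k + 2).val = (k.val + 2) % L := by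
    intro k
    rw [ZMod.val_add, hv2]
  have key : ∀ k : ZMod L, ∃ (R1 : G.Walk (γ (k + 1)) (γ k)) (R2 : G.Walk (γ (k + 2)) (γ k)),
      R1.IsPath ∧ R2.IsPath ∧ (∀ w ∈ R1.support, w ∈ C.support) ∧
      (∀ w ∈ R2.support, w ∈ C.support) ∧ R1.length + 1 = L ∧ R2.length + 2 = L ∧
      γ k ≠ γ (k + 1) := by
    intro k
    obtain ⟨Q, hQc, hQlen, hQsub, hQ1, hQ2⟩ :=
      rot_exists hCc (m := (k : ZMod L).val + 1) (by omega) (by have := hvlt k; omega)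
    have hQg1 : Q.getVert 1 = γ (k + 1) := by
      rw [hQ1, hγ]
      show C.getVert _ = C.getVert ((k + 1).val + 1)
      rw [hval1]
    have hQg2 : Q.getVert 2 = γ (k + 2) := by
      rw [hQ2, hγ]
      show C.getVert _ = C.getVert ((k + 2).val + 1)
      rw [hval2]
    have hQnn : ¬ Q.Nil := Walk.not_nil_iff_lt_length.mpr (by omega)
    obtain ⟨b1, hadj1, Q1, hQeq⟩ := Walk.not_nil_iff.mp hQnn
    have hb1 : b1 = γ (k + 1) := by rw [← hQg1, hQeq, Walk.getVert_cons _ _ one_ne_zero, Nat.sub_self, Walk.getVert_zero]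
    subst hb1
    rw [hQeq] at hQc hQlen hQsub hQg2
    have hQ1path : Q1.IsPath := ((Walk.cons_isCycle_iff _ _).mp hQc).1
    have hQ1len : Q1.length + 1 = L := by
      have h' := hQlen
      rw [Walk.length_cons] at h'
      omega
    have hQ1sub : ∀ w ∈ Q1.support, w ∈ C.support := fun w hw =>
      hQsub w (by rw [Walk.support_cons]; exact List.mem_cons_of_mem _ hw)
    have hQ1g1 : Q1.getVert 1 = γ (k + 2) := by rw [← hQg2, Walk.getVert_cons_succ]
    have hQ1nn : ¬ Q1.Nil := Walk.not_nil_iff_lt_length.mpr (by omega)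
    obtain ⟨b2, hadj2, Q2, hQeq2⟩ := Walk.not_nil_iff.mp hQ1nn
    have hb2 : b2 = γ (k + 2) := by rw [← hQ1g1, hQeq2, Walk.getVert_cons _ _ one_ne_zero, Nat.sub_self, Walk.getVert_zero]
    subst hb2
    have hQ2path : Q2.IsPath := by
      have h' := hQ1path
      rw [hQeq2] at h'
      exact h'.of_cons
    have hQ2len : Q2.length + 2 = L := by
      have h' := hQ1len
      rw [hQeq2, Walk.length_cons] at h'
      omega
    have hQ2sub : ∀ w ∈ Q2.support, w ∈ C.support := by
      intro w hw
      apply hQ1sub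
      rw [hQeq2, Walk.support_cons]
      exact List.mem_cons_of_mem _ hw
    exact ⟨Q1, Q2, hQ1path, hQ2path, hQ1sub, hQ2sub, hQ1len, hQ2len, hadj1.ne⟩
  have hE1 : ∀ k : ZMod L, γ k ∈ A ∪ B → γ (k + 1) ∈ A ∪ B → False := by
    intro k hk hk1
    obtain ⟨R1, R2, hR1p, hR2p, hR1s, hR2s, hR1l, hR2l, hne1⟩ := key k
    rcases hk with hkA | hkB <;> rcases hk1 with h1A | h1B
    · exact ear2 ⟨hCc, hCmax⟩ R1 hR1p hR1s hxC hne1 hkA.2.symm h1A.2 (by omega)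
    · exact ear3 ⟨hCc, hCmax⟩ R1 hR1p hR1s hxC hyC hxyne hkA.2.symm hxy h1B.2 (by omega)
    · exact ear3 ⟨hCc, hCmax⟩ R1 hR1p hR1s hyC hxC (fun h => hxyne h.symm) hkB.2.symm
        hxy.symm h1A.2 (by omega)
    · exact ear2 ⟨hCc, hCmax⟩ R1 hR1p hR1s hyC hne1 hkB.2.symm h1B.2 (by omega)
  have hE2 : ∀ k : ZMod L,
      ((γ k ∈ A ∧ γ (k + 2) ∈ B) ∨ (γ k ∈ B ∧ γ (k + 2) ∈ A)) → False := by
    intro k hk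
    obtain ⟨R1, R2, hR1p, hR2p, hR1s, hR2s, hR1l, hR2l, hne1⟩ := key k
    rcases hk with ⟨h1, h2⟩ | ⟨h1, h2⟩
    · exact ear3 ⟨hCc, hCmax⟩ R2 hR2p hR2s hxC hyC hxyne h1.2.symm hxy h2.2 (by omega)
    · exact ear3 ⟨hCc, hCmax⟩ R2 hR2p hR2s hyC hxC (fun h => hxyne h.symm) h1.2.symm
        hxy.symm h2.2 (by omega)
  set JA : Finset (ZMod L) := Finset.univ.filter (fun k => γ k ∈ A) with hJA
  set JB : Finset (ZMod L) := Finset.univ.filter (fun k => γ k ∈ B) with hJB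
  have hJAmem : ∀ k, k ∈ JA ↔ γ k ∈ A := by intro k; simp [hJA]
  have hJBmem : ∀ k, k ∈ JB ↔ γ k ∈ B := by intro k; simp [hJB]
  have himgA : A = γ '' (JA : Set (ZMod L)) := by
    ext w
    constructor
    · intro hw
      obtain ⟨k, hk⟩ := hsurj w hw.1
      exact ⟨k, Finset.mem_coe.mpr ((hJAmem k).mpr (by rw [hk]; exact hw)), hk⟩
    · rintro ⟨k, hk, rfl⟩
      exact (hJAmem k).mp (Finset.mem_coe.mp hk)
  have himgB : B = γ '' (JB : Set (ZMod L)) := by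
    ext w
    constructor
    · intro hw
      obtain ⟨k, hk⟩ := hsurj w hw.1
      exact ⟨k, Finset.mem_coe.mpr ((hJBmem k).mpr (by rw [hk]; exact hw)), hk⟩
    · rintro ⟨k, hk, rfl⟩
      exact (hJBmem k).mp (Finset.mem_coe.mp hk)
  have himgAB : A \ B = γ '' ((JA \ JB : Finset (ZMod L)) : Set (ZMod L)) := by
    ext w
    constructor
    · rintro ⟨hwa, hwb⟩
      obtain ⟨k, hk⟩ := hsurj w hwa.1
      refine ⟨k, Finset.mem_coe.mpr (Finset.mem_sdiff.mpr ⟨(hJAmem k).mpr (by rw [hk]; exact hwa),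
        fun h => hwb (by rw [← hk]; exact (hJBmem k).mp h)⟩), hk⟩
    · rintro ⟨k, hk, rfl⟩
      obtain ⟨h1', h2'⟩ := Finset.mem_sdiff.mp (Finset.mem_coe.mp hk)
      exact ⟨(hJAmem k).mp h1', fun h => h2' ((hJBmem k).mpr h)⟩
  have himgBA : B \ A = γ '' ((JB \ JA : Finset (ZMod L)) : Set (ZMod L)) := by
    ext w
    constructor
    · rintro ⟨hwa, hwb⟩
      obtain ⟨k, hk⟩ := hsurj w hwa.1
      refine ⟨k, Finset.mem_coe.mpr (Finset.mem_sdiff.mpr ⟨(hJBmem k).mpr (by rw [hk]; exact hwa),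
        fun h => hwb (by rw [← hk]; exact (hJAmem k).mp h)⟩), hk⟩
    · rintro ⟨k, hk, rfl⟩
      obtain ⟨h1', h2'⟩ := Finset.mem_sdiff.mp (Finset.mem_coe.mp hk)
      exact ⟨(hJBmem k).mp h1', fun h => h2' ((hJAmem k).mpr h)⟩
  have hcA : A.ncard = JA.card := by
    rw [himgA, Set.ncard_image_of_injective _ hγinj, Set.ncard_coe_finset]
  have hcB : B.ncard = JB.card := by
    rw [himgB, Set.ncard_image_of_injective _ hγinj, Set.ncard_coe_finset]
  have hcAB : (A \ B).ncard = (JA \ JB).card := by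
    rw [himgAB, Set.ncard_image_of_injective _ hγinj, Set.ncard_coe_finset]
  have hcBA : (B \ A).ncard = (JB \ JA).card := by
    rw [himgBA, Set.ncard_image_of_injective _ hγinj, Set.ncard_coe_finset]
  have hdx : G.minDegree ≤ JA.card + 1 := by
    have h1 : G.minDegree ≤ G.degree x := G.minDegree_le_degree x
    have h2 : G.neighborFinset x ⊆ JA.image γ ∪ {y} := by
      intro w hw
      rw [SimpleGraph.mem_neighborFinset] at hw
      by_cases hwC : w ∈ C.support
      · have hwA : w ∈ A := ⟨hwC, hw⟩
        obtain ⟨k, hk⟩ := hsurj w hwC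
        exact Finset.mem_union_left _
          (Finset.mem_image.mpr ⟨k, (hJAmem k).mpr (by rw [hk]; exact hwA), hk⟩)
      · have hwy : w = y := by
          by_contra hne'
          have hwP : w ∉ P.support := by
            intro hmem
            rcases hPsup w hmem with h' | h'
            · exact hw.ne' h'
            · exact hne' h'
          have hQpath : (Walk.cons hw.symm P).IsPath := hPp.cons hwP
          have := hPmax w y (Walk.cons hw.symm P) hQpath (by
            intro u hu
            rw [Walk.support_cons] at hu
            rcases List.mem_cons.mp hu with h' | h'
            · rw [h']; exact hwC
            · exact hPoff u h')
          rw [Walk.length_cons, hp] at this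
          omega
        exact Finset.mem_union_right _ (by simp [hwy])
    have h3 : (G.neighborFinset x).card ≤ (JA.image γ ∪ {y}).card := Finset.card_le_card h2
    have h4 : (JA.image γ ∪ ({y} : Finset V)).card ≤ (JA.image γ).card + 1 := by
      have := Finset.card_union_le (JA.image γ) ({y} : Finset V)
      simpa using this
    have h5 : (JA.image γ).card ≤ JA.card := Finset.card_image_le
    have h6 : G.degree x = (G.neighborFinset x).card := rfl
    omega
  have hdy : G.minDegree ≤ JB.card + 1 := by
    have h1 : G.minDegree ≤ G.degree y := G.minDegree_le_degree y
    have h2 : G.neighborFinset y ⊆ JB.image γ ∪ {x} := by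
      intro w hw
      rw [SimpleGraph.mem_neighborFinset] at hw
      by_cases hwC : w ∈ C.support
      · have hwB : w ∈ B := ⟨hwC, hw⟩
        obtain ⟨k, hk⟩ := hsurj w hwC
        exact Finset.mem_union_left _
          (Finset.mem_image.mpr ⟨k, (hJBmem k).mpr (by rw [hk]; exact hwB), hk⟩)
      · have hwx : w = x := by
          by_contra hne'
          have hwP : w ∉ P.reverse.support := by
            rw [Walk.support_reverse, List.mem_reverse]
            intro hmem
            rcases hPsup w hmem with h' | h'
            · exact hne' h'
            · exact hw.ne' h'
          have hQpath : (Walk.cons hw.symm P.reverse).IsPath := hPp.reverse.cons hwP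
          have := hPmax w x (Walk.cons hw.symm P.reverse) hQpath (by
            intro u hu
            rw [Walk.support_cons] at hu
            rcases List.mem_cons.mp hu with h' | h'
            · rw [h']; exact hwC
            · rw [Walk.support_reverse, List.mem_reverse] at h'
              exact hPoff u h')
          rw [Walk.length_cons, Walk.length_reverse, hp] at this
          omega
        exact Finset.mem_union_right _ (by simp [hwx])
    have h3 : (G.neighborFinset y).card ≤ (JB.image γ ∪ {x}).card := Finset.card_le_card h2
    have h4 : (JB.image γ ∪ ({x} : Finset V)).card ≤ (JB.image γ).card + 1 := by
      have := Finset.card_union_le (JB.image γ) ({x} : Finset V)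
      simpa using this
    have h5 : (JB.image γ).card ≤ JB.card := Finset.card_image_le
    have h6 : G.degree y = (G.neighborFinset y).card := rfl
    omega
  set JN := JA ∪ JB with hJN
  have hJNmem : ∀ k, k ∈ JN ↔ γ k ∈ A ∪ B := by
    intro k
    rw [hJN, Finset.mem_union, hJAmem, hJBmem]
    rfl
  have hE1' : ∀ k ∈ JN, k + 1 ∉ JN := fun k hk h1 =>
    hE1 k ((hJNmem k).mp hk) ((hJNmem _).mp h1)
  set img1 := JN.image (· + 1) with himg1
  set img2 := JN.image (· + 2) with himg2
  set U3 := img2 \ JN with hU3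
  have hd12 : Disjoint JN img1 := by
    rw [Finset.disjoint_left]
    intro k hk hk1
    obtain ⟨j, hj, hjk⟩ := Finset.mem_image.mp hk1
    exact hE1' j hj (by rw [hjk]; exact hk)
  have hd13 : Disjoint JN U3 := by
    rw [Finset.disjoint_left]
    intro k hk hkU
    exact (Finset.mem_sdiff.mp hkU).2 hk
  have hd23 : Disjoint img1 U3 := by
    rw [Finset.disjoint_left]
    intro k hk hkU
    obtain ⟨j, hj, hjk⟩ := Finset.mem_image.mp hk
    obtain ⟨hk2, hknotJN⟩ := Finset.mem_sdiff.mp hkU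
    obtain ⟨i, hi, hik⟩ := Finset.mem_image.mp hk2
    have hji : j = i + 1 := by
      have h' : j + 1 = i + 1 + 1 := by rw [hjk, ← hik]; ring
      exact add_left_injective 1 h'
    exact hE1' i hi (by rw [← hji]; exact hj)
  have hcard3 : JN.card + img1.card + U3.card ≤ L := by
    have hdisj : Disjoint (JN ∪ img1) U3 := Finset.disjoint_union_left.mpr ⟨hd13, hd23⟩
    have h1 : ((JN ∪ img1) ∪ U3).card = JN.card + img1.card + U3.card := by
      rw [Finset.card_union_of_disjoint hdisj, Finset.card_union_of_disjoint hd12]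
    have h2 : ((JN ∪ img1) ∪ U3).card ≤ Fintype.card (ZMod L) := Finset.card_le_univ _
    rw [ZMod.card] at h2
    omega
  have himg1c : img1.card = JN.card := Finset.card_image_of_injective _ (add_left_injective 1)
  have himg2c : img2.card = JN.card := Finset.card_image_of_injective _ (add_left_injective 2)
  set Short := JN.filter (fun k => k + 2 ∈ JN) with hShort
  have hU3c : U3.card + Short.card = JN.card := by
    have h1 : img2 ∩ JN = Short.image (· + 2) := by
      ext m
      simp only [Finset.mem_inter, Finset.mem_image, Finset.mem_filter, hShort, himg2]
      constructor
      · rintro ⟨⟨j, hj, rfl⟩, hm⟩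
        exact ⟨j, ⟨hj, hm⟩, rfl⟩
      · rintro ⟨j, ⟨hj, hj2⟩, rfl⟩
        exact ⟨⟨j, hj, rfl⟩, hj2⟩
    have h2 := Finset.card_sdiff_add_card_inter img2 JN
    rw [h1, Finset.card_image_of_injective _ (add_left_injective 2), himg2c] at h2
    rw [hU3]
    omega
  set SA := (JA \ JB).filter (fun k => k + 2 ∈ JA \ JB) with hSA
  set SB := (JB \ JA).filter (fun k => k + 2 ∈ JB \ JA) with hSB
  have hShortsub : Short ⊆ SA ∪ SB := by
    intro k hk
    obtain ⟨hkJN, hk2JN⟩ := Finset.mem_filter.mp hk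
    rcases Finset.mem_union.mp hkJN with hkA | hkB
    · have h2B : k + 2 ∉ JB := fun h =>
        hE2 k (Or.inl ⟨(hJAmem k).mp hkA, (hJBmem _).mp h⟩)
      have h2A : k + 2 ∈ JA := (Finset.mem_union.mp hk2JN).resolve_right h2B
      have hkB' : k ∉ JB := fun h =>
        hE2 k (Or.inr ⟨(hJBmem k).mp h, (hJAmem _).mp h2A⟩)
      exact Finset.mem_union_left _ (Finset.mem_filter.mpr
        ⟨Finset.mem_sdiff.mpr ⟨hkA, hkB'⟩, Finset.mem_sdiff.mpr ⟨h2A, h2B⟩⟩)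
    · have h2A : k + 2 ∉ JA := fun h =>
        hE2 k (Or.inr ⟨(hJBmem k).mp hkB, (hJAmem _).mp h⟩)
      have h2B : k + 2 ∈ JB := (Finset.mem_union.mp hk2JN).resolve_left h2A
      have hkA' : k ∉ JA := fun h =>
        hE2 k (Or.inl ⟨(hJAmem k).mp h, (hJBmem _).mp h2B⟩)
      exact Finset.mem_union_right _ (Finset.mem_filter.mpr
        ⟨Finset.mem_sdiff.mpr ⟨hkB, hkA'⟩, Finset.mem_sdiff.mpr ⟨h2B, h2A⟩⟩)
  have hJBcard : 2 ≤ JB.card := by rw [← hcB]; exact hy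
  have hJAcard : 2 ≤ JA.card := by rw [← hcA]; exact hx
  have hJBne : JB.Nonempty := Finset.card_pos.mp (by omega)
  have hJAne : JA.Nonempty := Finset.card_pos.mp (by omega)
  have hSAbound : (JA \ JB).Nonempty → SA.card < (JA \ JB).card := by
    intro hne'
    rcases lt_or_ge SA.card (JA \ JB).card with h | h
    · exact h
    exfalso
    have hSAeq : SA = JA \ JB := Finset.eq_of_subset_of_card_le (Finset.filter_subset _ _) h
    set T := (JA \ JB) ∪ (JA \ JB).image (· + 1) with hT
    have hTcl : ∀ k ∈ T, k + 1 ∈ T := by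
      intro k hk
      rcases Finset.mem_union.mp hk with h' | h'
      · exact Finset.mem_union_right _ (Finset.mem_image_of_mem _ h')
      · obtain ⟨j, hj, rfl⟩ := Finset.mem_image.mp h'
        have hj2 : j + 2 ∈ JA \ JB := by
          have hj' : j ∈ SA := by rw [hSAeq]; exact hj
          rw [hSA, Finset.mem_filter] at hj'
          exact hj'.2
        apply Finset.mem_union_left
        rw [show j + 1 + 1 = j + 2 by ring]
        exact hj2
    have hTuniv : T = Finset.univ :=
      zmod_closure T (hne'.mono Finset.subset_union_left) hTcl
    obtain ⟨b, hb⟩ := hJBne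
    have hbT : b ∈ T := hTuniv ▸ Finset.mem_univ b
    rcases Finset.mem_union.mp hbT with h' | h'
    · exact (Finset.mem_sdiff.mp h').2 hb
    · obtain ⟨j, hj, rfl⟩ := Finset.mem_image.mp h'
      have hjJN : j ∈ JN := Finset.mem_union_left _ (Finset.mem_sdiff.mp hj).1
      exact hE1' j hjJN (Finset.mem_union_right _ hb)
  have hSBbound : (JB \ JA).Nonempty → SB.card < (JB \ JA).card := by
    intro hne'
    rcases lt_or_ge SB.card (JB \ JA).card with h | h
    · exact h
    exfalso
    have hSBeq : SB = JB \ JA := Finset.eq_of_subset_of_card_le (Finset.filter_subset _ _) h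
    set T := (JB \ JA) ∪ (JB \ JA).image (· + 1) with hT
    have hTcl : ∀ k ∈ T, k + 1 ∈ T := by
      intro k hk
      rcases Finset.mem_union.mp hk with h' | h'
      · exact Finset.mem_union_right _ (Finset.mem_image_of_mem _ h')
      · obtain ⟨j, hj, rfl⟩ := Finset.mem_image.mp h'
        have hj2 : j + 2 ∈ JB \ JA := by
          have hj' : j ∈ SB := by rw [hSBeq]; exact hj
          rw [hSB, Finset.mem_filter] at hj'
          exact hj'.2
        apply Finset.mem_union_left
        rw [show j + 1 + 1 = j + 2 by ring]
        exact hj2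
    have hTuniv : T = Finset.univ :=
      zmod_closure T (hne'.mono Finset.subset_union_left) hTcl
    obtain ⟨b, hb⟩ := hJAne
    have hbT : b ∈ T := hTuniv ▸ Finset.mem_univ b
    rcases Finset.mem_union.mp hbT with h' | h'
    · exact (Finset.mem_sdiff.mp h').2 hb
    · obtain ⟨j, hj, rfl⟩ := Finset.mem_image.mp h'
      have hjJN : j ∈ JN := Finset.mem_union_right _ (Finset.mem_sdiff.mp hj).1
      exact hE1' j hjJN (Finset.mem_union_left _ hb)
  have hinterAB : JN.card + (JA ∩ JB).card = JA.card + JB.card := by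
    rw [hJN]
    exact Finset.card_union_add_card_inter JA JB
  have hsdA : (JA \ JB).card + (JA ∩ JB).card = JA.card := Finset.card_sdiff_add_card_inter JA JB
  have hsdB : (JB \ JA).card + (JB ∩ JA).card = JB.card := Finset.card_sdiff_add_card_inter JB JA
  have hBAint : (JB ∩ JA).card = (JA ∩ JB).card := by rw [Finset.inter_comm]
  have hShc : Short.card ≤ SA.card + SB.card :=
    le_trans (Finset.card_le_card hShortsub) (Finset.card_union_le _ _)
  have hSAsub : SA.card ≤ (JA \ JB).card := Finset.card_le_card (Finset.filter_subset _ _)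
  have hSBsub : SB.card ≤ (JB \ JA).card := Finset.card_le_card (Finset.filter_subset _ _)
  have hJABne : JA ≠ JB := by
    intro h
    apply hne
    show A = B
    rw [himgA, himgB, h]
  have hpq : (JA \ JB).Nonempty ∨ (JB \ JA).Nonempty := by
    by_contra hcon
    push_neg at hcon
    obtain ⟨h1', h2'⟩ := hcon
    rw [Finset.sdiff_eq_empty_iff_subset] at h1' h2'
    exact hJABne (Finset.Subset.antisymm h1' h2')
  have hSA' : (JA \ JB).card ≠ 0 → SA.card + 1 ≤ (JA \ JB).card := fun h =>
    hSAbound (Finset.card_pos.mp (by omega))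
  have hSB' : (JB \ JA).card ≠ 0 → SB.card + 1 ≤ (JB \ JA).card := fun h =>
    hSBbound (Finset.card_pos.mp (by omega))
  have hpq' : 1 ≤ (JA \ JB).card ∨ 1 ≤ (JB \ JA).card := by
    rcases hpq with h | h
    · left; exact Finset.card_pos.mpr h
    · right; exact Finset.card_pos.mpr h
  rw [hcAB, hcBA]
  rcases le_total ((JA \ JB).card) ((JB \ JA).card) with hmx | hmx
  · rw [max_eq_right hmx]
    constructor <;> omega
  · rw [max_eq_left hmx]
    constructor <;> omega

end ToughPaper
end

section
/- Let G be a graph, C a longest cycle in G with a fixed orientation, and P = x→y a longest path in G∖C of length p̄ ≥ 0 with N_C(x) = N_C(y) and |N_C(x)| ≥ 2. Let ξ₁,…,ξ_s be the vertices of N_C(x) in consecutive order on C, defining elementary segments I_i = ξ_i→ξ_{i+1}. If L is an intermediate path between two distinct elementary segments I_a and I_b (i.e., L is a path from a vertex z in the interior of I_a to a vertex w in the interior of I_b whose only vertices on C ∪ P are z and w), then |I_a| + |I_b| ≥ 2p̄ + 2|L| + 4. -/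
open SimpleGraph

namespace ToughPaper

variable {V : Type*}

/-! ### Auxiliary walk lemmas -/

section Aux

open SimpleGraph.Walk

variable [DecidableEq V] {G : SimpleGraph V} {u v w m a b c : V}

set_option linter.unusedSectionVars false

lemma takeUntil_start (p : G.Walk u v) (h : u ∈ p.support) : p.takeUntil u h = Walk.nil := by
  cases p <;> simp [Walk.takeUntil]

lemma dropUntil_start (p : G.Walk u v) (h : u ∈ p.support) : p.dropUntil u h = p := by
  cases p <;> simp [Walk.dropUntil]

lemma takeUntil_cons {r : G.Adj u c} {p : G.Walk c v} (h : b ∈ (Walk.cons r p).support)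
    (hne : u ≠ b) (hb : b ∈ p.support) :
    (Walk.cons r p).takeUntil b h = Walk.cons r (p.takeUntil b hb) := by
  simp [Walk.takeUntil, dif_neg hne]

lemma dropUntil_cons {r : G.Adj u c} {p : G.Walk c v} (h : b ∈ (Walk.cons r p).support)
    (hne : u ≠ b) (hb : b ∈ p.support) :
    (Walk.cons r p).dropUntil b h = p.dropUntil b hb := by
  simp [Walk.dropUntil, dif_neg hne]

lemma split_unique' {r : G.Walk u w} {p : G.Walk u b} {q : G.Walk b w}
    (heq : r = p.append q) (hcount : List.count b p.support = 1) (h : b ∈ r.support) :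
    r.takeUntil b h = p ∧ r.dropUntil b h = q := by
  subst heq
  induction p with
  | nil => exact ⟨takeUntil_start q h, dropUntil_start q h⟩
  | @cons u' c' bb radj p' ih =>
    have hbp' : bb ∈ p'.support := p'.end_mem_support
    have hne : u' ≠ bb := by
      intro hequ; subst hequ
      have h1 : 0 < List.count u' p'.support := List.count_pos_iff.mpr hbp'
      rw [Walk.support_cons, List.count_cons_self] at hcount
      omega
    have hcount' : List.count bb p'.support = 1 := by
      rw [Walk.support_cons, List.count_cons_of_ne hne] at hcount
      exact hcount
    have hbmem : bb ∈ (p'.append q).support := by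
      rw [Walk.mem_support_append_iff]; exact Or.inl hbp'
    obtain ⟨ih1, ih2⟩ := ih hcount' hbmem
    constructor
    · rw [show ((Walk.cons radj p').append q).takeUntil bb h
          = Walk.cons radj ((p'.append q).takeUntil bb hbmem) from
          takeUntil_cons h hne hbmem, ih1]
    · rw [show ((Walk.cons radj p').append q).dropUntil bb h
          = (p'.append q).dropUntil bb hbmem from
          dropUntil_cons h hne hbmem, ih2]

lemma rotate_eq_of' {c : G.Walk v v} {p : G.Walk v b} {q : G.Walk b v}
    (heq : c = p.append q) (hcount : List.count b p.support = 1) (h : b ∈ c.support) :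
    c.rotate _ h = q.append p := by
  obtain ⟨h1, h2⟩ := split_unique' heq hcount h
  rw [Walk.rotate, h1, h2]

lemma length_rotate' {c : G.Walk v v} (h : a ∈ c.support) :
    (c.rotate _ h).length = c.length := by
  rw [Walk.rotate, Walk.length_append]
  conv_rhs => rw [← Walk.take_spec c h, Walk.length_append]
  omega

lemma mem_support_rotate {c : G.Walk v v} (h : a ∈ c.support) :
    b ∈ (c.rotate _ h).support ↔ b ∈ c.support := by
  rw [Walk.rotate, Walk.mem_support_append_iff]
  conv_rhs => rw [← Walk.take_spec c h, Walk.mem_support_append_iff]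
  exact or_comm

lemma takeUntil_of_takeUntil {p : G.Walk u v} (hb : b ∈ p.support)
    (hc : c ∈ (p.takeUntil b hb).support) (hc' : c ∈ p.support) :
    p.takeUntil c hc' = (p.takeUntil b hb).takeUntil c hc := by
  refine (split_unique' (q := ((p.takeUntil b hb).dropUntil c hc).append (p.dropUntil b hb))
    ?_ (count_support_takeUntil_eq_one _ hc) hc').1
  rw [Walk.append_assoc, Walk.take_spec, Walk.take_spec]

lemma takeUntil_append_right {r : G.Walk u w} {p : G.Walk u m} {q : G.Walk m w}
    (heq : r = p.append q) (hbp : b ∉ p.support) (hbq : b ∈ q.support) (h : b ∈ r.support) :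
    r.takeUntil b h = p.append (q.takeUntil b hbq) := by
  have hbm : b ≠ m := fun he => hbp (he ▸ p.end_mem_support)
  refine (split_unique' (q := q.dropUntil b hbq) ?_ ?_ h).1
  · rw [← Walk.append_assoc, Walk.take_spec, heq]
  · rw [Walk.support_append, List.count_append, List.count_eq_zero.mpr hbp]
    have h1 := count_support_takeUntil_eq_one q hbq
    rw [Walk.support_eq_cons (q.takeUntil b hbq), List.count_cons_of_ne hbm.symm] at h1
    omega

lemma mem_tail_of_mem_support_ne (p : G.Walk u v) (hb : b ∈ p.support) (hne : b ≠ u) :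
    b ∈ p.support.tail := by
  rw [Walk.support_eq_cons p] at hb
  exact (List.mem_cons.mp hb).resolve_left hne

/-- Junction lemma for paths. -/
lemma eq_junction_of_append {p : G.Walk u m} {q : G.Walk m w}
    (h : (p.append q).IsPath) (hbp : b ∈ p.support) (hbq : b ∈ q.support) : b = m := by
  have hnd := h.support_nodup
  rw [Walk.support_append] at hnd
  have hdisj := List.disjoint_of_nodup_append hnd
  by_contra hne
  exact hdisj hbp (mem_tail_of_mem_support_ne q hbq hne)

/-- Junction lemma for closed walks with nodup tail. -/
lemma eq_junction_of_closed {c : G.Walk v v} {p : G.Walk v m} {q : G.Walk m v}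
    (heq : c = p.append q) (hnd : c.support.tail.Nodup)
    (hbp : b ∈ p.support) (hbq : b ∈ q.support) : b = v ∨ b = m := by
  subst heq
  rw [Walk.tail_support_append] at hnd
  have hdisj := List.disjoint_of_nodup_append hnd
  by_contra hne
  push_neg at hne
  exact hdisj (mem_tail_of_mem_support_ne p hbp hne.1) (mem_tail_of_mem_support_ne q hbq hne.2)

/-- Appending paths that intersect only in the junction. -/
lemma IsPath.append_junction {p : G.Walk u m} {q : G.Walk m w} (hp : p.IsPath) (hq : q.IsPath)
    (hint : ∀ b, b ∈ p.support → b ∈ q.support → b = m) : (p.append q).IsPath := by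
  rw [Walk.isPath_def, Walk.support_append]
  have hq' := hq.support_nodup
  rw [Walk.support_eq_cons q, List.nodup_cons] at hq'
  refine List.Nodup.append hp.support_nodup hq'.2 ?_
  intro b hbp hbq
  have hb : b = m := hint b hbp (by rw [Walk.support_eq_cons q]; exact List.mem_cons_of_mem _ hbq)
  exact hq'.1 (hb ▸ hbq)

lemma isPath_takeUntil_closed {c : G.Walk v v} (hnd : c.support.tail.Nodup)
    (ha : a ∈ c.support) : (c.takeUntil a ha).IsPath := by
  by_cases hav : a = v
  · subst hav; rw [takeUntil_start]; exact Walk.IsPath.nil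
  · have hnd' : ((c.takeUntil a ha).append (c.dropUntil a ha)).support.tail.Nodup := by
      rw [Walk.take_spec]; exact hnd
    rw [Walk.tail_support_append] at hnd'
    have hdisj := List.disjoint_of_nodup_append hnd'
    rw [Walk.isPath_def, Walk.support_eq_cons, List.nodup_cons]
    constructor
    · intro hvtail
      have hvdrop : v ∈ (c.dropUntil a ha).support.tail :=
        mem_tail_of_mem_support_ne _ (c.dropUntil a ha).end_mem_support (Ne.symm hav)
      exact hdisj hvtail hvdrop
    · exact hnd'.of_append_left

lemma isPath_dropUntil_closed {c : G.Walk v v} (hnd : c.support.tail.Nodup)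
    (ha : a ∈ c.support) (hav : a ≠ v) : (c.dropUntil a ha).IsPath := by
  have hnd' : ((c.takeUntil a ha).append (c.dropUntil a ha)).support.tail.Nodup := by
    rw [Walk.take_spec]; exact hnd
  rw [Walk.tail_support_append] at hnd'
  have hdisj := List.disjoint_of_nodup_append hnd'
  rw [Walk.isPath_def, Walk.support_eq_cons, List.nodup_cons]
  constructor
  · intro hatail
    have hatake : a ∈ (c.takeUntil a ha).support.tail :=
      mem_tail_of_mem_support_ne _ (c.takeUntil a ha).end_mem_support hav
    exact hdisj hatake hatail
  · exact hnd'.of_append_right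

lemma rotate_rotate {c : G.Walk v v} (hnd : c.support.tail.Nodup) (ha : a ∈ c.support)
    (hb : b ∈ (c.rotate _ ha).support) (hb' : b ∈ c.support) :
    (c.rotate _ ha).rotate _ hb = c.rotate _ hb' := by
  by_cases hba : b = a
  · subst hba
    show (c.rotate _ hb').rotate _ hb = c.rotate _ hb'
    rw [Walk.rotate, dropUntil_start, takeUntil_start, Walk.append_nil]
  · by_cases hbv : b = v
    · subst hbv
      have h2 : c.rotate _ hb' = c := by
        rw [Walk.rotate, dropUntil_start, takeUntil_start, Walk.append_nil]
      rw [h2]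
      have hnddrop : (c.dropUntil a ha).support.tail.Nodup := by
        have hnd' : ((c.takeUntil a ha).append (c.dropUntil a ha)).support.tail.Nodup := by
          rw [Walk.take_spec]; exact hnd
        rw [Walk.tail_support_append] at hnd'
        exact hnd'.of_append_right
      have hcount : List.count b (c.dropUntil a ha).support = 1 := by
        rw [Walk.support_eq_cons, List.count_cons_of_ne (Ne.symm hba)]
        exact List.count_eq_one_of_mem hnddrop
          (mem_tail_of_mem_support_ne _ (c.dropUntil a ha).end_mem_support hba)
      rw [rotate_eq_of' (c := c.rotate _ ha) rfl hcount hb, Walk.take_spec]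
    · have hsplit : c = (c.takeUntil a ha).append (c.dropUntil a ha) := (Walk.take_spec c ha).symm
      have hndab : ((c.takeUntil a ha).support.tail ++ (c.dropUntil a ha).support.tail).Nodup := by
        rw [← Walk.tail_support_append, Walk.take_spec]; exact hnd
      have hdisj := List.disjoint_of_nodup_append hndab
      by_cases hbTa : b ∈ (c.takeUntil a ha).support
      · have hbDa : b ∉ (c.dropUntil a ha).support := by
          intro hmem
          exact hdisj (mem_tail_of_mem_support_ne _ hbTa hbv)
            (mem_tail_of_mem_support_ne _ hmem hba)
        set Ta := c.takeUntil a ha with hTa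
        set Da := c.dropUntil a ha with hDa
        have e1 : c.rotate _ hb' = ((Ta.dropUntil b hbTa).append Da).append (Ta.takeUntil b hbTa) := by
          refine rotate_eq_of' ?_ (count_support_takeUntil_eq_one _ hbTa) hb'
          rw [Walk.append_assoc, Walk.take_spec]; exact hsplit
        have e2 : (c.rotate _ ha).rotate _ hb
            = (Ta.dropUntil b hbTa).append (Da.append (Ta.takeUntil b hbTa)) := by
          refine rotate_eq_of' ?_ ?_ hb
          · rw [Walk.rotate, ← Walk.append_assoc, Walk.take_spec]
          · rw [Walk.support_append, List.count_append, List.count_eq_zero.mpr hbDa]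
            have h1 := count_support_takeUntil_eq_one Ta hbTa
            rw [Walk.support_eq_cons (Ta.takeUntil b hbTa), List.count_cons_of_ne (Ne.symm hbv)] at h1
            omega
        rw [e1, e2, Walk.append_assoc]
      · have hbDa : b ∈ (c.dropUntil a ha).support := by
          have := hb'
          rw [hsplit, Walk.mem_support_append_iff] at this
          exact this.resolve_left hbTa
        set Ta := c.takeUntil a ha with hTa
        set Da := c.dropUntil a ha with hDa
        have e1 : c.rotate _ hb' = (Da.dropUntil b hbDa).append (Ta.append (Da.takeUntil b hbDa)) := by
          refine rotate_eq_of' ?_ ?_ hb'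
          · rw [← Walk.append_assoc, Walk.take_spec]; exact hsplit
          · rw [Walk.support_append, List.count_append, List.count_eq_zero.mpr hbTa]
            have h1 := count_support_takeUntil_eq_one Da hbDa
            rw [Walk.support_eq_cons (Da.takeUntil b hbDa), List.count_cons_of_ne (Ne.symm hba)] at h1
            omega
        have e2 : (c.rotate _ ha).rotate _ hb
            = ((Da.dropUntil b hbDa).append Ta).append (Da.takeUntil b hbDa) := by
          refine rotate_eq_of' ?_ (count_support_takeUntil_eq_one _ hbDa) hb
          rw [Walk.rotate, Walk.append_assoc, Walk.take_spec]
        rw [e1, e2, Walk.append_assoc]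

lemma arcLen_spec {C : G.Walk v v} (ha : a ∈ C.support) (hb : b ∈ (C.rotate _ ha).support) :
    arcLen C a b = ((C.rotate _ ha).takeUntil b hb).length := by
  rw [arcLen, dif_pos ⟨ha, hb⟩]

lemma arcSupport_spec {C : G.Walk v v} (ha : a ∈ C.support) (hb : b ∈ (C.rotate _ ha).support) :
    arcSupport C a b = ((C.rotate _ ha).takeUntil b hb).support := by
  rw [arcSupport, dif_pos ⟨ha, hb⟩]

end Aux


/-- **Lemma 2 (a1).** With `C` a longest cycle, `P = x→y` a longest path in `G ∖ C` of
length `p̄ ≥ 0`, `N_C(x) = N_C(y)`, `|N_C(x)| ≥ 2`: if `L` is an intermediate path between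
two distinct elementary segments `I_a = ξ_a→ξ_a'` and `I_b = ξ_b→ξ_b'`, then
`|I_a| + |I_b| ≥ 2p̄ + 2|L| + 4`. -/
theorem lemma2_a1 {V : Type*} [Fintype V] [DecidableEq V]
    (G : SimpleGraph V) {v x y ξa ξa' ξb ξb' z w : V}
    (C : G.Walk v v) (P : G.Walk x y) (L : G.Walk z w)
    (hC : IsLongestCycle G C) (hP : IsLongestPathOff G C.support P)
    (hN : nbrsOn G C.support x = nbrsOn G C.support y)
    (hcard : 2 ≤ (nbrsOn G C.support x).ncard)
    (hL : IsInterPath G C P.support (nbrsOn G C.support x) ξa ξa' ξb ξb' L) :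
    2 * P.length + 2 * L.length + 4 ≤ arcLen C ξa ξa' + arcLen C ξb ξb' := by
  classical
  obtain ⟨hCcyc, hCmax⟩ := hC
  obtain ⟨hPp, hPoff, -⟩ := hP
  obtain ⟨hca, hcb, hab, hLp, hLpos, hza, hwb, hLdisj⟩ := hL
  -- basic memberships and adjacencies
  have haC : ξa ∈ C.support := hca.1.1
  have ha'C : ξa' ∈ C.support := hca.2.1.1
  have hbC : ξb ∈ C.support := hcb.1.1
  have hb'C : ξb' ∈ C.support := hcb.2.1.1
  have hxa : G.Adj x ξa := hca.1.2
  have hadj_a'x : G.Adj ξa' x := (hca.2.1.2).symm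
  have hadj_yb' : G.Adj y ξb' := (hN ▸ hcb.2.1 : ξb' ∈ nbrsOn G C.support y).2
  have hadj_by : G.Adj ξb y := ((hN ▸ hcb.1 : ξb ∈ nbrsOn G C.support y).2).symm
  have hxC : x ∉ C.support := fun h => hPoff x P.start_mem_support h
  have hyC : y ∉ C.support := fun h => hPoff y P.end_mem_support h
  have notP : ∀ u, u ∈ C.support → u ∉ P.support := fun u h hp => hPoff u hp h
  -- the rotated cycle based at ξa
  set D := C.rotate _ haC with hDdef
  have hDcyc : D.IsCycle := hCcyc.rotate haC
  have hDnd : D.support.tail.Nodup := hDcyc.support_nodup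
  have memD : ∀ u, u ∈ D.support ↔ u ∈ C.support := fun u => mem_support_rotate haC
  have ha'D : ξa' ∈ D.support := (memD ξa').mpr ha'C
  have hbD : ξb ∈ D.support := (memD ξb).mpr hbC
  have hb'D : ξb' ∈ D.support := (memD ξb').mpr hb'C
  have arcSa0 : arcSupport C ξa ξa' = (D.takeUntil ξa' ha'D).support := arcSupport_spec haC ha'D
  have arcLa0 : arcLen C ξa ξa' = (D.takeUntil ξa' ha'D).length := arcLen_spec haC ha'D
  have hzT0 : z ∈ (D.takeUntil ξa' ha'D).support := by
    have := hza.1; rwa [arcSa0] at this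
  have hbnotT0 : ∀ _ : ξb ∈ (D.takeUntil ξa' ha'D).support, ξb = ξa' := by
    intro h
    by_contra hne
    exact hca.2.2.2 ξb (by rwa [arcSa0]) (Ne.symm hab) hne hcb.1
  -- split D at ξb
  set U := D.takeUntil ξb hbD with hUdef
  set B := D.dropUntil ξb hbD with hBdef
  have hUB : U.append B = D := Walk.take_spec D hbD
  have hUp : U.IsPath := isPath_takeUntil_closed hDnd hbD
  have hBp : B.IsPath := isPath_dropUntil_closed hDnd hbD (fun h => hab h.symm)
  have CROSSD : ∀ u, u ∈ U.support → u ∈ B.support → u = ξa ∨ u = ξb :=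
    fun u h1 h2 => eq_junction_of_closed hUB.symm hDnd h1 h2
  have hUC : ∀ {u}, u ∈ U.support → u ∈ C.support :=
    fun h => (memD _).mp (Walk.support_takeUntil_subset D hbD h)
  have hBC : ∀ {u}, u ∈ B.support → u ∈ C.support :=
    fun h => (memD _).mp (Walk.support_dropUntil_subset D hbD h)
  -- ξa' lies in U
  have ha'U : ξa' ∈ U.support := by
    by_cases hba' : ξb = ξa'
    · exact hba' ▸ U.end_mem_support
    · by_contra hn
      have ha'B : ξa' ∈ B.support := by
        have := ha'D; rw [← hUB, Walk.mem_support_append_iff] at this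
        exact this.resolve_left hn
      have heq1 : D.takeUntil ξa' ha'D = U.append (B.takeUntil ξa' ha'B) :=
        takeUntil_append_right hUB.symm hn ha'B ha'D
      have hbT0 : ξb ∈ (D.takeUntil ξa' ha'D).support := by
        rw [heq1, Walk.mem_support_append_iff]; exact Or.inl U.end_mem_support
      exact hba' (hbnotT0 hbT0)
  -- the segment Ia and the middle part M
  set Ia := U.takeUntil ξa' ha'U with hIadef
  set M := U.dropUntil ξa' ha'U with hMdef
  have hIaM : Ia.append M = U := Walk.take_spec U ha'U
  have hT0Ia : D.takeUntil ξa' ha'D = Ia := takeUntil_of_takeUntil hbD ha'U ha'D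
  have arcla : arcLen C ξa ξa' = Ia.length := by rw [arcLa0, hT0Ia]
  have hzIa : z ∈ Ia.support := by rw [← hT0Ia]; exact hzT0
  have hIaP : Ia.IsPath := hUp.takeUntil ha'U
  have hMp : M.IsPath := hUp.dropUntil ha'U
  have hUp' : (Ia.append M).IsPath := by rw [hIaM]; exact hUp
  have CROSSU : ∀ u, u ∈ Ia.support → u ∈ M.support → u = ξa' :=
    fun u h1 h2 => eq_junction_of_append hUp' h1 h2
  have hIaU : ∀ {u}, u ∈ Ia.support → u ∈ U.support :=
    fun h => Walk.support_takeUntil_subset U ha'U h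
  have hMU : ∀ {u}, u ∈ M.support → u ∈ U.support :=
    fun h => Walk.support_dropUntil_subset U ha'U h
  -- split Ia at z
  set ta := Ia.takeUntil z hzIa with htadef
  set ua := Ia.dropUntil z hzIa with huadef
  have htaua : ta.append ua = Ia := Walk.take_spec Ia hzIa
  have htaP : ta.IsPath := hIaP.takeUntil hzIa
  have huaP : ua.IsPath := hIaP.dropUntil hzIa
  have hIaP' : (ta.append ua).IsPath := by rw [htaua]; exact hIaP
  have CROSSIa : ∀ u, u ∈ ta.support → u ∈ ua.support → u = z :=
    fun u h1 h2 => eq_junction_of_append hIaP' h1 h2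
  have htaIa : ∀ {u}, u ∈ ta.support → u ∈ Ia.support :=
    fun h => Walk.support_takeUntil_subset Ia hzIa h
  have huaIa : ∀ {u}, u ∈ ua.support → u ∈ Ia.support :=
    fun h => Walk.support_dropUntil_subset Ia hzIa h
  -- relate the arc at ξb to the decomposition of D
  have hb'E : ξb' ∈ (C.rotate _ hbC).support := (mem_support_rotate hbC).mpr hb'C
  have arcSb0 : arcSupport C ξb ξb' = ((C.rotate _ hbC).takeUntil ξb' hb'E).support :=
    arcSupport_spec hbC hb'E
  have arcLb0 : arcLen C ξb ξb' = ((C.rotate _ hbC).takeUntil ξb' hb'E).length :=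
    arcLen_spec hbC hb'E
  have hErot : C.rotate _ hbC = B.append U := by
    rw [← rotate_rotate hCcyc.support_nodup haC hbD hbC]; rfl
  have hb'B : ξb' ∈ B.support := by
    by_contra hn
    have hb'U : ξb' ∈ U.support := by
      have := hb'D; rw [← hUB, Walk.mem_support_append_iff] at this
      exact (this.resolve_right hn)
    have heq2 : (C.rotate _ hbC).takeUntil ξb' hb'E = B.append (U.takeUntil ξb' hb'U) :=
      takeUntil_append_right hErot hn hb'U hb'E
    have haArc : ξa ∈ arcSupport C ξb ξb' := by
      rw [arcSb0, heq2, Walk.mem_support_append_iff]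
      exact Or.inl B.end_mem_support
    have hab' : ξa ≠ ξb' := by rintro rfl; exact hn B.end_mem_support
    exact hcb.2.2.2 ξa haArc hab hab' hca.1
  set Ib := B.takeUntil ξb' hb'B with hIbdef
  set O := B.dropUntil ξb' hb'B with hOdef
  have hIbO : Ib.append O = B := Walk.take_spec B hb'B
  have hIbE : (C.rotate _ hbC).takeUntil ξb' hb'E = Ib := by
    refine (split_unique' (q := O.append U) ?_ (Walk.count_support_takeUntil_eq_one _ hb'B) hb'E).1
    rw [Walk.append_assoc, hIbO]; exact hErot
  have arcSb : arcSupport C ξb ξb' = Ib.support := by rw [arcSb0, hIbE]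
  have arclb : arcLen C ξb ξb' = Ib.length := by rw [arcLb0, hIbE]
  have hIbP : Ib.IsPath := hBp.takeUntil hb'B
  have hOP : O.IsPath := hBp.dropUntil hb'B
  have hBp' : (Ib.append O).IsPath := by rw [hIbO]; exact hBp
  have CROSSB : ∀ u, u ∈ Ib.support → u ∈ O.support → u = ξb' :=
    fun u h1 h2 => eq_junction_of_append hBp' h1 h2
  have hIbB : ∀ {u}, u ∈ Ib.support → u ∈ B.support :=
    fun h => Walk.support_takeUntil_subset B hb'B h
  have hOB : ∀ {u}, u ∈ O.support → u ∈ B.support :=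
    fun h => Walk.support_dropUntil_subset B hb'B h
  have hwIb : w ∈ Ib.support := by
    have := hwb.1; rwa [arcSb] at this
  -- split Ib at w
  set tb := Ib.takeUntil w hwIb with htbdef
  set ub := Ib.dropUntil w hwIb with hubdef
  have htbub : tb.append ub = Ib := Walk.take_spec Ib hwIb
  have htbP : tb.IsPath := hIbP.takeUntil hwIb
  have hubP : ub.IsPath := hIbP.dropUntil hwIb
  have hIbP' : (tb.append ub).IsPath := by rw [htbub]; exact hIbP
  have CROSSIb : ∀ u, u ∈ tb.support → u ∈ ub.support → u = w :=
    fun u h1 h2 => eq_junction_of_append hIbP' h1 h2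
  have htbIb : ∀ {u}, u ∈ tb.support → u ∈ Ib.support :=
    fun h => Walk.support_takeUntil_subset Ib hwIb h
  have hubIb : ∀ {u}, u ∈ ub.support → u ∈ Ib.support :=
    fun h => Walk.support_dropUntil_subset Ib hwIb h
  -- interiors have no N-vertices
  have hIntA : ∀ u, u ∈ Ia.support → u ≠ ξa → u ≠ ξa' → u ∉ nbrsOn G C.support x :=
    fun u h h1 h2 => hca.2.2.2 u (by rwa [arcSa0, hT0Ia]) h1 h2
  have hIntB : ∀ u, u ∈ Ib.support → u ≠ ξb → u ≠ ξb' → u ∉ nbrsOn G C.support x :=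
    fun u h h1 h2 => hcb.2.2.2 u (by rwa [arcSb]) h1 h2
  have hzN : z ∉ nbrsOn G C.support x := hIntA z hzIa hza.2.1 hza.2.2
  have hwN : w ∉ nbrsOn G C.support x := hIntB w hwIb hwb.2.1 hwb.2.2
  have hzC : z ∈ C.support := hUC (hIaU hzIa)
  have hwC : w ∈ C.support := hBC (hIbB hwIb)
  have hLC : ∀ u, u ∈ L.support → u ∈ C.support → u = z ∨ u = w :=
    fun u h hc => hLdisj u h (Or.inl hc)
  have hLP : ∀ u, u ∈ L.support → u ∈ P.support → u = z ∨ u = w :=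
    fun u h hp => hLdisj u h (Or.inr hp)
  -- exclusion battery
  have ea'ta : ξa' ∉ ta.support := fun h => hza.2.2 (CROSSIa ξa' h ua.end_mem_support).symm
  have e_ba : ∀ _ : ξb ∈ Ia.support, ξb = ξa' := fun h => hbnotT0 (by rwa [hT0Ia])
  have e_b_ta : ξb ∉ ta.support := fun h => ea'ta ((e_ba (htaIa h)) ▸ h)
  have e1 : ξa ∉ M.support := fun h => hca.2.2.1 (CROSSU ξa Ia.start_mem_support h)
  have e_aua : ξa ∉ ua.support := fun h => hza.2.1 (CROSSIa ξa ta.start_mem_support h).symm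
  have e3 : ξb' ∉ tb.support := fun h => hwb.2.2 (CROSSIb ξb' h ub.end_mem_support).symm
  have e4 : ξb ∉ O.support := fun h => hcb.2.2.1 (CROSSB ξb Ib.start_mem_support h)
  have e7 : ξb ∉ ub.support := fun h => hwb.2.1 (CROSSIb ξb tb.start_mem_support h).symm
  have e8 : z ∉ B.support := by
    intro h
    rcases CROSSD z (hIaU hzIa) h with h1 | h1
    · exact hzN (h1 ▸ hca.1)
    · exact hzN (h1 ▸ hcb.1)
  have e9 : w ∉ U.support := by
    intro h
    rcases CROSSD w h (hIbB hwIb) with h1 | h1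
    · exact hwN (h1 ▸ hca.1)
    · exact hwN (h1 ▸ hcb.1)
  have e10 : z ∉ M.support := fun h => hza.2.2 (CROSSU z hzIa h)
  have e14 : ξa ∉ tb.support := by
    intro h
    by_cases hq : ξa = ξb'
    · exact e3 (hq ▸ h)
    · exact hIntB ξa (htbIb h) hab hq hca.1
  have e15 : w ∉ O.support := fun h => hwb.2.2 (CROSSB w hwIb h)
  have e16 : ξa' ∉ O.support := by
    intro h
    rcases CROSSD ξa' ha'U (hOB h) with h1 | h1
    · exact hca.2.2.1 h1.symm
    · exact e4 (h1 ▸ h)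
  have hne_a'b' : ξa' ≠ ξb' := by
    intro he
    have ha'B : ξa' ∈ B.support := by rw [he]; exact hIbB Ib.end_mem_support
    rcases CROSSD ξa' ha'U ha'B with h1 | h1
    · exact hca.2.2.1 h1.symm
    · exact hcb.2.2.1 (h1.symm.trans he)
  -- ===== Cycle A =====
  have hMtbP : (M.append tb).IsPath := by
    refine IsPath.append_junction hMp htbP (fun u h1 h2 => ?_)
    rcases CROSSD u (hMU h1) (hIbB (htbIb h2)) with h3 | h3
    · exact absurd (h3 ▸ h1) e1
    · exact h3
  have hR4mem : ∀ {u}, u ∈ (M.append tb).reverse.support ↔ u ∈ M.support ∨ u ∈ tb.support := by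
    intro u
    rw [Walk.support_reverse, List.mem_reverse, Walk.mem_support_append_iff]
  have hR3p : (L.append (M.append tb).reverse).IsPath := by
    refine IsPath.append_junction hLp hMtbP.reverse (fun u h1 h2 => ?_)
    rcases hR4mem.mp h2 with h2' | h2'
    · rcases hLC u h1 (hUC (hMU h2')) with h3 | h3
      · exact absurd (h3 ▸ h2') e10
      · exact h3
    · rcases hLC u h1 (hBC (hIbB (htbIb h2'))) with h3 | h3
      · exact absurd (h3 ▸ h2') (fun hh => e8 (hIbB (htbIb hh)))
      · exact h3
  have hR2p : (ta.append (L.append (M.append tb).reverse)).IsPath := by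
    refine IsPath.append_junction htaP hR3p (fun u h1 h2 => ?_)
    rw [Walk.mem_support_append_iff] at h2
    rcases h2 with h2 | h2
    · rcases hLC u h2 (hUC (hIaU (htaIa h1))) with h3 | h3
      · exact h3
      · exact absurd (h3 ▸ h1) (fun hh => e9 (hIaU (htaIa hh)))
    · rcases hR4mem.mp h2 with h2' | h2'
      · exact absurd ((CROSSU u (htaIa h1) h2') ▸ h1) ea'ta
      · rcases CROSSD u (hIaU (htaIa h1)) (hIbB (htbIb h2')) with h3 | h3
        · exact absurd (h3 ▸ h2') e14
        · exact absurd (h3 ▸ h1) e_b_ta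
  have hR1p : (O.append (ta.append (L.append (M.append tb).reverse))).IsPath := by
    refine IsPath.append_junction hOP hR2p (fun u h1 h2 => ?_)
    rw [Walk.mem_support_append_iff] at h2
    rcases h2 with h2 | h2
    · rcases CROSSD u (hIaU (htaIa h2)) (hOB h1) with h3 | h3
      · exact h3
      · exact absurd (h3 ▸ h1) e4
    · rw [Walk.mem_support_append_iff] at h2
      rcases h2 with h2 | h2
      · rcases hLC u h2 (hBC (hOB h1)) with h3 | h3
        · exact absurd (h3 ▸ h1) (fun hh => e8 (hOB hh))
        · exact absurd (h3 ▸ h1) e15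
      · rcases hR4mem.mp h2 with h2' | h2'
        · rcases CROSSD u (hMU h2') (hOB h1) with h3 | h3
          · exact absurd (h3 ▸ h2') e1
          · exact absurd (h3 ▸ h1) e4
        · exact absurd ((CROSSB u (htbIb h2') h1) ▸ h2') e3
  have hRpp : (Walk.cons hadj_a'x P).IsPath := hPp.cons (notP ξa' ha'C)
  have hQAp : ((O.append (ta.append (L.append (M.append tb).reverse))).append
      (Walk.cons hadj_a'x P)).IsPath := by
    refine IsPath.append_junction hR1p hRpp (fun u h1 h2 => ?_)
    rw [Walk.support_cons, List.mem_cons] at h2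
    rcases h2 with h2 | h2
    · exact h2
    · exfalso
      rw [Walk.mem_support_append_iff] at h1
      rcases h1 with h1 | h1
      · exact notP u (hBC (hOB h1)) h2
      · rw [Walk.mem_support_append_iff] at h1
        rcases h1 with h1 | h1
        · exact notP u (hUC (hIaU (htaIa h1))) h2
        · rw [Walk.mem_support_append_iff] at h1
          rcases h1 with h1 | h1
          · rcases hLP u h1 h2 with h3 | h3
            · exact notP z hzC (h3 ▸ h2)
            · exact notP w hwC (h3 ▸ h2)
          · rcases hR4mem.mp h1 with h1' | h1'
            · exact notP u (hUC (hMU h1')) h2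
            · exact notP u (hBC (hIbB (htbIb h1'))) h2
  have hedgeA : s(y, ξb') ∉ ((O.append (ta.append (L.append (M.append tb).reverse))).append
      (Walk.cons hadj_a'x P)).edges := by
    intro he
    rw [Walk.edges_append, List.mem_append] at he
    rcases he with he | he
    · rw [Walk.edges_append, List.mem_append] at he
      rcases he with he | he
      · exact hyC (hBC (hOB (Walk.fst_mem_support_of_mem_edges _ he)))
      · rw [Walk.edges_append, List.mem_append] at he
        rcases he with he | he
        · exact hyC (hUC (hIaU (htaIa (Walk.fst_mem_support_of_mem_edges _ he))))
        · rw [Walk.edges_append, List.mem_append] at he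
          rcases he with he | he
          · have hyL : y ∈ L.support := Walk.fst_mem_support_of_mem_edges _ he
            rcases hLP y hyL P.end_mem_support with h3 | h3
            · exact hyC (h3 ▸ hzC)
            · exact hyC (h3 ▸ hwC)
          · have : y ∈ (M.append tb).reverse.support := Walk.fst_mem_support_of_mem_edges _ he
            rcases hR4mem.mp this with h1' | h1'
            · exact hyC (hUC (hMU h1'))
            · exact hyC (hBC (hIbB (htbIb h1')))
    · rw [Walk.edges_cons, List.mem_cons] at he
      rcases he with he | he
      · rw [Sym2.eq_iff] at he
        rcases he with ⟨h1, h2⟩ | ⟨h1, h2⟩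
        · exact hyC (h1 ▸ ha'C)
        · exact hne_a'b' (h2.symm)
      · exact notP ξb' hb'C (Walk.snd_mem_support_of_mem_edges _ he)
  have hcycA : (Walk.cons hadj_yb' ((O.append (ta.append (L.append (M.append tb).reverse))).append
      (Walk.cons hadj_a'x P))).IsCycle := (Walk.cons_isCycle_iff _ _).mpr ⟨hQAp, hedgeA⟩
  have hlenA := hCmax y _ hcycA
  -- ===== Cycle B =====
  have hS5p : (Walk.cons hadj_by P.reverse).IsPath := by
    refine hPp.reverse.cons ?_
    rw [Walk.support_reverse, List.mem_reverse]
    exact notP ξb hbC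
  have hS5mem : ∀ {u}, u ∈ (Walk.cons hadj_by P.reverse).support ↔ u = ξb ∨ u ∈ P.support := by
    intro u
    rw [Walk.support_cons, List.mem_cons, Walk.support_reverse, List.mem_reverse]
  have hS4p : (M.append (Walk.cons hadj_by P.reverse)).IsPath := by
    refine IsPath.append_junction hMp hS5p (fun u h1 h2 => ?_)
    rcases hS5mem.mp h2 with h2 | h2
    · exact h2
    · exact absurd h2 (notP u (hUC (hMU h1)))
  have hS3p : (ua.append (M.append (Walk.cons hadj_by P.reverse))).IsPath := by
    refine IsPath.append_junction huaP hS4p (fun u h1 h2 => ?_)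
    rw [Walk.mem_support_append_iff] at h2
    rcases h2 with h2 | h2
    · exact CROSSU u (huaIa h1) h2
    · rcases hS5mem.mp h2 with h2 | h2
      · exact (h2.trans (e_ba (h2 ▸ huaIa h1)))
      · exact absurd h2 (notP u (hUC (hIaU (huaIa h1))))
  have hS2p : (L.reverse.append (ua.append (M.append (Walk.cons hadj_by P.reverse)))).IsPath := by
    refine IsPath.append_junction hLp.reverse hS3p (fun u h1 h2 => ?_)
    rw [Walk.support_reverse, List.mem_reverse] at h1
    rw [Walk.mem_support_append_iff] at h2
    rcases h2 with h2 | h2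
    · rcases hLC u h1 (hUC (hIaU (huaIa h2))) with h3 | h3
      · exact h3
      · exact absurd (h3 ▸ h2) (fun hh => e9 (hIaU (huaIa hh)))
    · rw [Walk.mem_support_append_iff] at h2
      rcases h2 with h2 | h2
      · rcases hLC u h1 (hUC (hMU h2)) with h3 | h3
        · exact absurd (h3 ▸ h2) e10
        · exact absurd (h3 ▸ h2) (fun hh => e9 (hMU hh))
      · rcases hS5mem.mp h2 with h2 | h2
        · rcases hLC ξb (h2 ▸ h1) hbC with h3 | h3
          · exact absurd (h3 ▸ hcb.1) hzN
          · exact absurd (h3 ▸ hcb.1) hwN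
        · rcases hLP u h1 h2 with h3 | h3
          · exact absurd (h3 ▸ h2) (notP z hzC)
          · exact absurd (h3 ▸ h2) (notP w hwC)
  have hS1p : (ub.reverse.append (L.reverse.append (ua.append (M.append
      (Walk.cons hadj_by P.reverse))))).IsPath := by
    refine IsPath.append_junction hubP.reverse hS2p (fun u h1 h2 => ?_)
    rw [Walk.support_reverse, List.mem_reverse] at h1
    rw [Walk.mem_support_append_iff] at h2
    rcases h2 with h2 | h2
    · rw [Walk.support_reverse, List.mem_reverse] at h2
      rcases hLC u h2 (hBC (hIbB (hubIb h1))) with h3 | h3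
      · exact absurd (h3 ▸ h1) (fun hh => e8 (hIbB (hubIb hh)))
      · exact h3
    · rw [Walk.mem_support_append_iff] at h2
      rcases h2 with h2 | h2
      · rcases CROSSD u (hIaU (huaIa h2)) (hIbB (hubIb h1)) with h3 | h3
        · exact absurd (h3 ▸ h2) e_aua
        · exact absurd (h3 ▸ h1) e7
      · rw [Walk.mem_support_append_iff] at h2
        rcases h2 with h2 | h2
        · rcases CROSSD u (hMU h2) (hIbB (hubIb h1)) with h3 | h3
          · exact absurd (h3 ▸ h2) e1
          · exact absurd (h3 ▸ h1) e7
        · rcases hS5mem.mp h2 with h2 | h2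
          · exact absurd (h2 ▸ h1) e7
          · exact absurd h2 (notP u (hBC (hIbB (hubIb h1))))
  have hS0p : (O.reverse.append (ub.reverse.append (L.reverse.append (ua.append (M.append
      (Walk.cons hadj_by P.reverse)))))).IsPath := by
    refine IsPath.append_junction hOP.reverse hS1p (fun u h1 h2 => ?_)
    rw [Walk.support_reverse, List.mem_reverse] at h1
    rw [Walk.mem_support_append_iff] at h2
    rcases h2 with h2 | h2
    · rw [Walk.support_reverse, List.mem_reverse] at h2
      exact CROSSB u (hubIb h2) h1
    · rw [Walk.mem_support_append_iff] at h2
      rcases h2 with h2 | h2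
      · rw [Walk.support_reverse, List.mem_reverse] at h2
        rcases hLC u h2 (hBC (hOB h1)) with h3 | h3
        · exact absurd (h3 ▸ h1) (fun hh => e8 (hOB hh))
        · exact absurd (h3 ▸ h1) e15
      · rw [Walk.mem_support_append_iff] at h2
        rcases h2 with h2 | h2
        · rcases CROSSD u (hIaU (huaIa h2)) (hOB h1) with h3 | h3
          · exact absurd (h3 ▸ h2) e_aua
          · exact absurd (h3 ▸ h1) e4
        · rw [Walk.mem_support_append_iff] at h2
          rcases h2 with h2 | h2
          · rcases CROSSD u (hMU h2) (hOB h1) with h3 | h3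
            · exact absurd (h3 ▸ h2) e1
            · exact absurd (h3 ▸ h1) e4
          · rcases hS5mem.mp h2 with h2 | h2
            · exact absurd (h2 ▸ h1) e4
            · exact absurd h2 (notP u (hBC (hOB h1)))
  have hedgeB : s(x, ξa) ∉ (O.reverse.append (ub.reverse.append (L.reverse.append (ua.append
      (M.append (Walk.cons hadj_by P.reverse)))))).edges := by
    intro he
    rw [Walk.edges_append, List.mem_append] at he
    rcases he with he | he
    · rw [Walk.edges_reverse, List.mem_reverse] at he
      exact hxC (hBC (hOB (Walk.fst_mem_support_of_mem_edges _ he)))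
    · rw [Walk.edges_append, List.mem_append] at he
      rcases he with he | he
      · rw [Walk.edges_reverse, List.mem_reverse] at he
        exact hxC (hBC (hIbB (hubIb (Walk.fst_mem_support_of_mem_edges _ he))))
      · rw [Walk.edges_append, List.mem_append] at he
        rcases he with he | he
        · rw [Walk.edges_reverse, List.mem_reverse] at he
          have hxL : x ∈ L.support := Walk.fst_mem_support_of_mem_edges _ he
          rcases hLP x hxL P.start_mem_support with h3 | h3
          · exact hxC (h3 ▸ hzC)
          · exact hxC (h3 ▸ hwC)
        · rw [Walk.edges_append, List.mem_append] at he
          rcases he with he | he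
          · exact hxC (hUC (hIaU (huaIa (Walk.fst_mem_support_of_mem_edges _ he))))
          · rw [Walk.edges_append, List.mem_append] at he
            rcases he with he | he
            · exact hxC (hUC (hMU (Walk.fst_mem_support_of_mem_edges _ he)))
            · rw [Walk.edges_cons, List.mem_cons] at he
              rcases he with he | he
              · rw [Sym2.eq_iff] at he
                rcases he with ⟨h1, h2⟩ | ⟨h1, h2⟩
                · exact hxC (h1 ▸ hbC)
                · exact hab h2
              · rw [Walk.edges_reverse, List.mem_reverse] at he
                exact notP ξa haC (Walk.snd_mem_support_of_mem_edges _ he)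
  have hcycB : (Walk.cons hxa (O.reverse.append (ub.reverse.append (L.reverse.append (ua.append
      (M.append (Walk.cons hadj_by P.reverse))))))).IsCycle :=
    (Walk.cons_isCycle_iff _ _).mpr ⟨hS0p, hedgeB⟩
  have hlenB := hCmax x _ hcycB
  -- ===== length bookkeeping =====
  have hlenD : D.length = C.length := length_rotate' haC
  have hlen1 : U.length + B.length = C.length := by
    have := congrArg Walk.length hUB
    rw [Walk.length_append] at this
    rw [← hlenD]; exact this
  have hlen2 : Ia.length + M.length = U.length := by
    have := congrArg Walk.length hIaM
    rwa [Walk.length_append] at this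
  have hlen3 : ta.length + ua.length = Ia.length := by
    have := congrArg Walk.length htaua
    rwa [Walk.length_append] at this
  have hlen4 : Ib.length + O.length = B.length := by
    have := congrArg Walk.length hIbO
    rwa [Walk.length_append] at this
  have hlen5 : tb.length + ub.length = Ib.length := by
    have := congrArg Walk.length htbub
    rwa [Walk.length_append] at this
  simp only [Walk.length_cons, Walk.length_append, Walk.length_reverse] at hlenA hlenB
  rw [arcla, arclb]
  omega

end ToughPaper
end
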